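/- For every n ≥ 6, the partitions of n with first part n−3 satisfy |η_{(n−3,3)}| > |η_{(n−3,2,1)}| ≥ |η_{(n−3,1,1,1)}|, and the second inequality is an equality if and only if n = 6 (so it is strict for n ≥ 7). -/

import Mathlib

/-- Derangement numbers: `D 0 = 1`, `D (m+1) = (m+1) * D m + (-1)^(m+1)`. -/
def derange : ℕ → ℤ
  | 0 => 1
  | n + 1 => (n + 1 : ℤ) * derange n + (-1) ^ (n + 1)

/-- Subtract one from every part and discard the parts that become zero
(deleting the first column of the Ferrers diagram). -/
def strip (l : List ℕ) : List ℕ := (l.map (· - 1)).filter (fun x => 0 < x)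

lemma strip_measure (l : List ℕ) : (strip l).sum + (strip l).length ≤ l.sum := by
  induction l with
  | nil => simp [strip]
  | cons x t ih =>
      simp only [strip, List.map_cons, List.filter_cons] at ih ⊢
      by_cases hx : 0 < x - 1 <;> simp [hx] <;> omega

/-- The eigenvalues of the derangement graph, defined by Renteln's recurrence:
`η ∅ = 1` and `η λ = (-1)^h (η (λ-ĥ) + (-1)^{λ₁} h η (λ-ĉ))`, where
`h = λ₁ + r - 1` is the hook size, `λ-ĥ = strip (tail λ)` removes the hook,
and `λ-ĉ = strip λ` removes the first column. -/
def eta : List ℕ → ℤ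
  | [] => 1
  | a :: t =>
      (-1) ^ (a + t.length) *
        (eta (strip t) + (-1) ^ a * ((a : ℤ) + t.length) * eta (strip (a :: t)))
  termination_by l => l.sum + l.length
  decreasing_by
  · have h1 := strip_measure t
    simp only [List.sum_cons, List.length_cons]
    omega
  · have h1 := strip_measure (a :: t)
    simp only [List.sum_cons, List.length_cons] at h1 ⊢
    omega

/-- `l` is (the list of parts of) a partition of `n`: weakly decreasing,
all parts positive, summing to `n`. -/
def IsPartition (n : ℕ) (l : List ℕ) : Prop :=
  l.Pairwise (· ≥ ·) ∧ (∀ x ∈ l, 0 < x) ∧ l.sum = n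

/-- The hook partition `(a, 1^(n-a))` of `n`. -/
def hookP (n a : ℕ) : List ℕ := a :: List.replicate (n - a) 1

lemma eta_nil : eta [] = 1 := by rw [eta]

lemma eta_single (m : ℕ) : eta [m] = derange m := by
  induction m with
  | zero => rw [eta]; simp [strip, eta_nil, derange]
  | succ k ih =>
      rw [eta]
      rcases Nat.eq_zero_or_pos k with rfl | hk
      · simp [strip, eta_nil, derange]
      · have hs : strip [k+1] = [k] := by simp [strip]; omega
        rw [hs, ih, derange]
        simp only [List.length_nil, strip, List.map_nil, List.filter_nil, eta_nil]
        ring_nf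
        rw [Even.neg_one_pow (by exact ⟨k, by ring⟩ : Even (k*2))]
        push_cast; ring

lemma eta_one : eta [1] = 0 := by rw [eta_single]; rfl

lemma eta_two : eta [2] = 1 := by rw [eta_single]; rfl

lemma one_le_derange_two_add (m : ℕ) : 1 ≤ derange (m+2) := by
  induction m with
  | zero => norm_num [derange]
  | succ j ih =>
      rw [derange]
      have hj : (0:ℤ) ≤ (j:ℤ) := by positivity
      rcases Nat.even_or_odd (j+3) with h | h
      · rw [h.neg_one_pow]; push_cast; nlinarith
      · rw [h.neg_one_pow]; push_cast; nlinarith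

lemma one_le_derange (k : ℕ) (h : k ≠ 1) : 1 ≤ derange k := by
  rcases k with _ | _ | m
  · norm_num [derange]
  · omega
  · exact one_le_derange_two_add m

lemma derange_nonneg (k : ℕ) : 0 ≤ derange k := by
  rcases eq_or_ne k 1 with rfl | h
  · norm_num [derange]
  · linarith [one_le_derange k h]

lemma eta_hook1 (k : ℕ) : eta [k+1, 1] = (-1)^k - ((k:ℤ)+2) * derange k := by
  have hs : eta (strip [k+1, 1]) = derange k := by
    rcases k with _ | j
    · simp [strip, eta_nil, derange]
    · have h1 : strip [j+1+1, 1] = [j+1] := by simp [strip]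
      rw [h1, eta_single]
  rw [eta, hs]
  have hs2 : strip [1] = [] := by simp [strip]
  rw [hs2, eta_nil]
  rcases Nat.even_or_odd k with h | h <;>
    · simp only [pow_succ, h.neg_one_pow, List.length_cons, List.length_nil]
      push_cast; ring

lemma eta_22 (k : ℕ) : eta [k+2, 2] = -((k:ℤ)+3) * eta [k+1, 1] := by
  have hs : strip [k+2, 2] = [k+1, 1] := by simp [strip]
  have hs2 : strip [2] = [1] := by simp [strip]
  rw [eta, hs, hs2, eta_one]
  rcases Nat.even_or_odd k with h | h <;>
    · simp only [pow_succ, h.neg_one_pow, List.length_cons, List.length_nil]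
      push_cast; ring

lemma etaA (k : ℕ) :
    eta [k+3, 3] = (-1)^k * (1 + ((k:ℤ)+3)*((k:ℤ)+4))
      - ((k:ℤ)+2)*((k:ℤ)+3)*((k:ℤ)+4) * derange k := by
  have hs : strip [k+3, 3] = [k+2, 2] := by simp [strip]
  have hs2 : strip [3] = [2] := by simp [strip]
  rw [eta, hs, hs2, eta_two, eta_22, eta_hook1]
  rcases Nat.even_or_odd k with h | h <;>
    · simp only [pow_succ, h.neg_one_pow, List.length_cons, List.length_nil]
      push_cast; ring

lemma etaB (k : ℕ) :
    eta [k+3, 2, 1] = ((k:ℤ)+5) * ((-1)^(k+1) - ((k:ℤ)+3) * derange (k+1)) := by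
  have hs : strip [k+3, 2, 1] = [k+2, 1] := by simp [strip]
  have hs2 : strip [2, 1] = [1] := by simp [strip]
  rw [eta, hs, hs2, eta_one]
  rw [show (k+2 : ℕ) = (k+1)+1 from rfl, eta_hook1]
  rcases Nat.even_or_odd k with h | h <;>
    · simp only [pow_succ, h.neg_one_pow, List.length_cons, List.length_nil]
      push_cast; ring

lemma etaC (k : ℕ) :
    eta [k+3, 1, 1, 1] = (-1)^k - ((k:ℤ)+6) * derange (k+2) := by
  have hs : strip [k+3, 1, 1, 1] = [k+2] := by simp [strip]
  have hs2 : strip [1, 1, 1] = [] := by simp [strip]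
  rw [eta, hs, hs2, eta_nil, eta_single]
  rcases Nat.even_or_odd k with h | h <;>
    · simp only [pow_succ, h.neg_one_pow, List.length_cons, List.length_nil]
      push_cast; ring

/-- For `n ≥ 6`, `|η_{(n-3,3)}| > |η_{(n-3,2,1)}| ≥ |η_{(n-3,1,1,1)}|`, with the second
inequality an equality exactly when `n = 6`. -/
theorem eta_n_minus_three (n : ℕ) (hn : 6 ≤ n) :
    |eta [n - 3, 2, 1]| < |eta [n - 3, 3]| ∧
    |eta [n - 3, 1, 1, 1]| ≤ |eta [n - 3, 2, 1]| ∧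
    (|eta [n - 3, 2, 1]| = |eta [n - 3, 1, 1, 1]| ↔ n = 6) := by
  obtain ⟨k, rfl⟩ : ∃ k, n = k + 6 := ⟨n - 6, by omega⟩
  have h3 : k + 6 - 3 = k + 3 := by omega
  rw [h3, etaA, etaB, etaC]
  set K := (k : ℤ) with hKdef
  have hK : (0:ℤ) ≤ K := by rw [hKdef]; positivity
  have hd0 : 0 ≤ derange k := derange_nonneg k
  have he0 : 0 ≤ derange (k+1) := derange_nonneg (k+1)
  have hiff : derange (k+1) = 0 ↔ k = 0 := by
    constructor
    · intro hz
      by_contra hk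
      have := one_le_derange (k+1) (by omega)
      linarith
    · rintro rfl; norm_num [derange]
  rcases Nat.even_or_odd k with h | h
  -- even case
  · have hd1 : 1 ≤ derange k := one_le_derange k (by
      rintro rfl; rw [Nat.even_iff] at h; omega)
    have he : derange (k+1) = (K+1) * derange k - 1 := by
      rw [derange, (h.add_one).neg_one_pow]; ring
    have hf : derange (k+2) = (K+2) * derange (k+1) + 1 := by
      rw [derange, pow_succ, pow_succ, h.neg_one_pow]; push_cast; ring
    rw [h.neg_one_pow, (h.add_one).neg_one_pow, hf]
    set d := derange k with hdd
    set e := derange (k+1) with hee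
    have hA : 1 * (1 + (K+3)*(K+4)) - (K+2)*(K+3)*(K+4) * d < 0 := by
      nlinarith [mul_nonneg hK hK, mul_nonneg (mul_nonneg hK hK) hK,
        mul_nonneg (mul_nonneg (mul_nonneg hK hK) hK) (by linarith : (0:ℤ) ≤ d - 1),
        mul_nonneg (mul_nonneg hK hK) (by linarith : (0:ℤ) ≤ d - 1),
        mul_nonneg hK (by linarith : (0:ℤ) ≤ d - 1)]
    have hB : (K+5) * (-1 - (K+3) * e) < 0 := by
      nlinarith [mul_nonneg hK he0]
    have hC : 1 - (K+6) * ((K+2) * e + 1) < 0 := by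
      nlinarith [mul_nonneg hK he0, mul_nonneg hK hK]
    rw [abs_of_neg hA, abs_of_neg hB, abs_of_neg hC]
    refine ⟨?_, ?_, ?_⟩
    · rw [he]
      nlinarith [mul_nonneg hK (by linarith : (0:ℤ) ≤ d - 1)]
    · linarith [he0]
    · constructor
      · intro heq
        have he1 : e = 0 := by linarith
        have := hiff.mp he1
        omega
      · intro h6
        have hk0 : k = 0 := by omega
        have he1 : e = 0 := hiff.mpr hk0
        linear_combination 3 * he1
  -- odd case
  · have hk1 : (1:ℤ) ≤ K := by
      rw [hKdef]; exact_mod_cast h.pos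
    have he : derange (k+1) = (K+1) * derange k + 1 := by
      rw [derange, (h.add_one).neg_one_pow]
    have hf : derange (k+2) = (K+2) * derange (k+1) - 1 := by
      rw [derange, pow_succ, pow_succ, h.neg_one_pow]; push_cast; ring
    rw [h.neg_one_pow, (h.add_one).neg_one_pow, hf]
    set d := derange k with hdd
    set e := derange (k+1) with hee
    have he1 : 1 ≤ e := by nlinarith [mul_nonneg hK hd0]
    have hA : -1 * (1 + (K+3)*(K+4)) - (K+2)*(K+3)*(K+4) * d < 0 := by
      nlinarith [mul_nonneg hK hK, mul_nonneg (mul_nonneg hK hK) hK,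
        mul_nonneg (mul_nonneg (mul_nonneg hK hK) hK) hd0,
        mul_nonneg (mul_nonneg hK hK) hd0, mul_nonneg hK hd0]
    have hB : (K+5) * (1 - (K+3) * e) < 0 := by
      nlinarith [mul_nonneg hK (by linarith : (0:ℤ) ≤ e - 1)]
    have hC : -1 - (K+6) * ((K+2) * e - 1) < 0 := by
      nlinarith [mul_nonneg hK (by linarith : (0:ℤ) ≤ e - 1), mul_nonneg hK hK]
    rw [abs_of_neg hA, abs_of_neg hB, abs_of_neg hC]
    refine ⟨?_, ?_, ?_⟩
    · rw [he]
      nlinarith [mul_nonneg hK hd0]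
    · linarith [he1]
    · constructor
      · intro heq; exfalso; linarith [he1]
      · intro h6
        exfalso
        have hk0 : k = 0 := by omega
        rw [hk0, Nat.odd_iff] at h
        omega
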